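/- Consider the random design on n items with 2t tests and column-sparsity s = t/d (t a positive multiple of d, d ≥ 1): each item j is independently assigned a uniformly random s-element subset S j of Fin (2*t). Fix D ⊆ Fin n with |D| ≤ d and fix j ∉ D. Then the probability that j fails to be distinguishable from D (i.e., every test in S j contains some item of D) is at most 2^{-t/d}. -/

import Mathlib

lemma desc_ineq (t : ℕ) : ∀ s, s ≤ t → 2 ^ s * t.descFactorial s ≤ (2 * t).descFactorial s := by
  intro s
  induction s with
  | zero => simp
  | succ s ih =>
    intro hs
    rw [Nat.descFactorial_succ, Nat.descFactorial_succ, pow_succ]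
    have h1 := ih (Nat.le_of_succ_le hs)
    calc 2 ^ s * 2 * ((t - s) * t.descFactorial s)
        = (2 * (t - s)) * (2 ^ s * t.descFactorial s) := by ring
      _ ≤ (2 * t - s) * ((2 * t).descFactorial s) := by
          apply Nat.mul_le_mul _ h1
          omega

lemma choose_ineq (t s : ℕ) (hs : s ≤ t) : t.choose s * 2 ^ s ≤ (2 * t).choose s := by
  have h := desc_ineq t s hs
  rw [Nat.descFactorial_eq_factorial_mul_choose, Nat.descFactorial_eq_factorial_mul_choose] at h
  have hf : 0 < Nat.factorial s := Nat.factorial_pos s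
  nlinarith [h]

/-- In the random design on `n` items with `2t` tests and
column-sparsity `s = t/d` (`t` a positive multiple of `d`, `d ≥ 1`), where each
item is independently assigned a uniformly random `s`-element subset of
`Fin (2t)` (equivalently, the uniform distribution on all such column-support
functions), for any fixed `D ⊆ Fin n` with `|D| ≤ d` and `j ∉ D`, the
probability that `j` fails to be distinguishable from `D` (every test in `S j`
contains some item of `D`) is at most `2^{-t/d}`. -/
theorem prob_not_distinguishable_le (n t d : ℕ) (hd : 1 ≤ d) (ht : 0 < t)
    (hdvd : d ∣ t) (D : Finset (Fin n)) (hD : D.card ≤ d)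
    (j : Fin n) (hj : j ∉ D) :
    (((Finset.univ.filter
          (fun S : Fin n → Finset (Fin (2 * t)) => ∀ i, (S i).card = t / d)).filter
        (fun S => ∀ i ∈ S j, ∃ k ∈ D, i ∈ S k)).card : ℝ) /
      ((Finset.univ.filter
          (fun S : Fin n → Finset (Fin (2 * t)) => ∀ i, (S i).card = t / d)).card : ℝ)
      ≤ (1 / 2 : ℝ) ^ (t / d) := by
  classical
  set s := t / d with hs
  have hst : s ≤ t := Nat.div_le_self t d
  have hts : s * d = t := Nat.div_mul_cancel hdvd
  set Ω := Finset.univ.filter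
      (fun S : Fin n → Finset (Fin (2 * t)) => ∀ i, (S i).card = s) with hΩ
  set Bad := Ω.filter (fun S => ∀ i ∈ S j, ∃ k ∈ D, i ∈ S k) with hBadDef
  set C1 := t.choose s with hC1
  set C2 := (2 * t).choose s with hC2
  -- restriction map
  set r : (Fin n → Finset (Fin (2 * t))) → ({i : Fin n // i ≠ j} → Finset (Fin (2 * t))) :=
    fun S k => S k.1 with hr
  -- union of columns in D, as a function of the restriction
  set B : ({i : Fin n // i ≠ j} → Finset (Fin (2 * t))) → Finset (Fin (2 * t)) :=
    fun f => D.attach.biUnion (fun k => f ⟨k.1, fun h => hj (h ▸ k.2)⟩) with hB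
  -- per-fiber inequality
  have key : ∀ f, (Bad.filter (fun S => r S = f)).card * C2
      ≤ (Ω.filter (fun S => r S = f)).card * C1 := by
    intro f
    by_cases hfib : (Ω.filter (fun S => r S = f)).Nonempty
    · obtain ⟨S0, hS0⟩ := hfib
      rw [Finset.mem_filter] at hS0
      have hS0Ω := hS0.1
      rw [hΩ, Finset.mem_filter] at hS0Ω
      have hgood : ∀ k, (f k).card = s := by
        intro k
        rw [← hS0.2]
        exact hS0Ω.2 k.1
      -- Ω fiber has card C2
      have hΩf : (Ω.filter (fun S => r S = f)).card = C2 := by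
        have hpc : (Finset.powersetCard s (Finset.univ : Finset (Fin (2 * t)))).card = C2 := by
          rw [Finset.card_powersetCard, Finset.card_univ, Fintype.card_fin, hC2]
        rw [← hpc]
        apply Finset.card_bij' (fun S _ => S j)
          (fun T _ => fun i => if h : i = j then T else f ⟨i, h⟩)
        · intro S hS
          rw [Finset.mem_filter] at hS
          have := hS.1
          rw [hΩ, Finset.mem_filter] at this
          rw [Finset.mem_powersetCard]
          exact ⟨Finset.subset_univ _, this.2 j⟩
        · intro T hT
          rw [Finset.mem_powersetCard] at hT
          rw [Finset.mem_filter]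
          constructor
          · rw [hΩ, Finset.mem_filter]
            refine ⟨Finset.mem_univ _, fun i => ?_⟩
            by_cases h : i = j
            · simp [h, hT.2]
            · simp [h, hgood]
          · funext k
            simp [hr, k.2]
        · intro S hS
          rw [Finset.mem_filter] at hS
          funext i
          by_cases h : i = j
          · simp [h]
          · simp only [h, dif_neg, not_false_iff]
            rw [← hS.2]
        · intro T hT
          simp
      -- Bad fiber card ≤ C1
      have hBf : (Bad.filter (fun S => r S = f)).card ≤ C1 := by
        have hcardB : (B f).card ≤ t := by
          calc (B f).card ≤ ∑ k ∈ D.attach, (f ⟨k.1, fun h => hj (h ▸ k.2)⟩).card :=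
                Finset.card_biUnion_le
            _ = D.attach.card * s := by
                rw [Finset.sum_congr rfl (fun k _ => hgood _), Finset.sum_const, smul_eq_mul]
            _ ≤ d * s := by
                apply Nat.mul_le_mul_right
                rw [Finset.card_attach]; exact hD
            _ = t := by rw [mul_comm]; exact hts
        calc (Bad.filter (fun S => r S = f)).card
            ≤ (Finset.powersetCard s (B f)).card := by
              apply Finset.card_le_card_of_injOn (fun S => S j)
              · intro S hS
                rw [Finset.mem_coe, Finset.mem_filter] at hS
                have hSB := hS.1
                rw [hBadDef, Finset.mem_filter] at hSB
                have hSΩ := hSB.1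
                rw [hΩ, Finset.mem_filter] at hSΩ
                rw [Finset.mem_coe, Finset.mem_powersetCard]
                refine ⟨fun i hi => ?_, hSΩ.2 j⟩
                obtain ⟨k, hk, hik⟩ := hSB.2 i hi
                have hkj : k ≠ j := fun h => hj (h ▸ hk)
                apply Finset.mem_biUnion.2
                refine ⟨⟨k, hk⟩, Finset.mem_attach _ _, ?_⟩
                rw [← hS.2]
                exact hik
              · intro S1 h1 S2 h2 heq
                rw [Finset.mem_coe, Finset.mem_filter] at h1 h2
                funext i
                by_cases h : i = j
                · rw [h]; exact heq
                · have e1 : S1 i = f ⟨i, h⟩ := by rw [← h1.2]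
                  have e2 : S2 i = f ⟨i, h⟩ := by rw [← h2.2]
                  rw [e1, e2]
          _ = (B f).card.choose s := Finset.card_powersetCard s (B f)
          _ ≤ C1 := Nat.choose_le_choose s hcardB
      rw [hΩf]
      exact Nat.mul_le_mul hBf (le_refl C2) |>.trans (by rw [mul_comm])
    · have hempty : Ω.filter (fun S => r S = f) = ∅ :=
        Finset.not_nonempty_iff_eq_empty.1 hfib
      have : Bad.filter (fun S => r S = f) = ∅ := by
        rw [← Finset.subset_empty, ← hempty]
        apply Finset.filter_subset_filter
        rw [hBadDef]
        exact Finset.filter_subset _ _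
      rw [this, hempty]
      simp
  -- sum over fibers
  have hΩsum : Ω.card = ∑ f ∈ Finset.univ, (Ω.filter (fun S => r S = f)).card :=
    Finset.card_eq_sum_card_fiberwise (fun S _ => Finset.mem_univ _)
  have hBsum : Bad.card = ∑ f ∈ Finset.univ, (Bad.filter (fun S => r S = f)).card :=
    Finset.card_eq_sum_card_fiberwise (fun S _ => Finset.mem_univ _)
  have hmain : Bad.card * C2 ≤ Ω.card * C1 := by
    rw [hΩsum, hBsum, Finset.sum_mul, Finset.sum_mul]
    exact Finset.sum_le_sum (fun f _ => key f)
  -- combine with choose inequality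
  have hC1pos : 0 < C1 := Nat.choose_pos hst
  have hfinal : Bad.card * 2 ^ s ≤ Ω.card := by
    have h1 : Bad.card * 2 ^ s * C1 ≤ Ω.card * C1 := by
      calc Bad.card * 2 ^ s * C1 = Bad.card * (C1 * 2 ^ s) := by ring
        _ ≤ Bad.card * C2 := Nat.mul_le_mul_left _ (choose_ineq t s hst)
        _ ≤ Ω.card * C1 := hmain
    exact Nat.le_of_mul_le_mul_right h1 hC1pos
  -- Ω is nonempty
  have hΩpos : 0 < Ω.card := by
    obtain ⟨T0, _, hT0⟩ := Finset.exists_subset_card_eq (s := (Finset.univ : Finset (Fin (2 * t)))) (n := s)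
      (by rw [Finset.card_univ, Fintype.card_fin]; omega)
    apply Finset.card_pos.2
    exact ⟨fun _ => T0, by rw [hΩ, Finset.mem_filter]; exact ⟨Finset.mem_univ _, fun _ => hT0⟩⟩
  -- real arithmetic
  have hΩR : (0 : ℝ) < (Ω.card : ℝ) := by exact_mod_cast hΩpos
  rw [div_le_iff₀ hΩR]
  have hcast : (Bad.card : ℝ) * 2 ^ s ≤ (Ω.card : ℝ) := by exact_mod_cast hfinal
  have h2pos : (0 : ℝ) < 2 ^ s := by positivity
  calc (Bad.card : ℝ) ≤ (Ω.card : ℝ) / 2 ^ s := by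
        rw [le_div_iff₀ h2pos]; exact hcast
    _ = (1 / 2 : ℝ) ^ s * (Ω.card : ℝ) := by
        rw [div_pow, one_pow]; ring
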